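/- Let A, B, C be sets, let R ⊆ A × B and S ⊆ B × C be finite relations, and let Δ > 0 be a real number. Let H = {c ∈ C : |{b ∈ B : (b, c) ∈ S}| > Δ}. Then the number of pairs (a, c) ∈ A × C such that c ∈ H and there exists b ∈ B with (a, b) ∈ R and (b, c) ∈ S is at most |R| · |S| / Δ. -/

import Mathlib

/-- Let `R ⊆ A × B`, `S ⊆ B × C` be finite relations and `Δ > 0` a real.
Let `H = {c : deg_S(c) > Δ}` be the heavy elements of `C`.  Then the number of pairs
`(a, c)` with `c ∈ H` joined by some `b` via `R` and `S` is at most `|R| · |S| / Δ`. -/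
theorem stmt11 {A B C : Type*} (R : Set (A × B)) (S : Set (B × C))
    (hR : R.Finite) (hS : S.Finite) (Δ : ℝ) (hΔ : 0 < Δ) :
    (({p : A × C | Δ < (({b : B | (b, p.2) ∈ S}).ncard : ℝ) ∧
        ∃ b : B, (p.1, b) ∈ R ∧ (b, p.2) ∈ S}).ncard : ℝ)
      ≤ (R.ncard : ℝ) * (S.ncard : ℝ) / Δ := by
  classical
  set T : Set (A × C) := {p : A × C | Δ < (({b : B | (b, p.2) ∈ S}).ncard : ℝ) ∧
        ∃ b : B, (p.1, b) ∈ R ∧ (b, p.2) ∈ S} with hT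
  by_cases hB : Nonempty B
  · -- main case
    have hTfin : T.Finite := by
      apply ((hR.prod hS).image (fun q : (A × B) × (B × C) => (q.1.1, q.2.2))).subset
      rintro ⟨a, c⟩ ⟨-, b, hbR, hbS⟩
      exact ⟨((a, b), (b, c)), ⟨hbR, hbS⟩, rfl⟩
    set Rf := hR.toFinset
    set Sf := hS.toFinset
    set Tf := hTfin.toFinset with hTf
    haveI : Inhabited B := Classical.inhabited_of_nonempty hB
    set w : A × C → B := fun p =>
      if h : ∃ b : B, (p.1, b) ∈ R ∧ (b, p.2) ∈ S then h.choose else default with hw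
    set Uf : Finset ((A × C) × (B × C)) :=
      (Tf ×ˢ Sf).filter (fun q => q.2.2 = q.1.2) with hUf
    -- degree lemma
    have hdeg : ∀ c : C, (({b : B | (b, c) ∈ S}).ncard : ℕ)
        = (Sf.filter fun s => s.2 = c).card := by
      intro c
      have h1 : {b : B | (b, c) ∈ S} = Prod.fst '' {s : B × C | s ∈ S ∧ s.2 = c} := by
        ext b
        constructor
        · intro hb; exact ⟨(b, c), ⟨hb, rfl⟩, rfl⟩
        · rintro ⟨s, ⟨hs, hsc⟩, rfl⟩
          show (s.1, c) ∈ S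
          rw [show (s.1, c) = s from by rw [← hsc]]
          exact hs
      have h2 : {s : B × C | s ∈ S ∧ s.2 = c} = ↑(Sf.filter fun s => s.2 = c) := by
        ext s; simp [Sf, hS]
      rw [h1, Set.ncard_image_of_injOn, h2, Set.ncard_coe_finset]
      rintro ⟨b1, c1⟩ ⟨hs1, hc1⟩ ⟨b2, c2⟩ ⟨hs2, hc2⟩ h
      simp only at hc1 hc2 h
      subst hc1; subst hc2; subst h; rfl
    -- Uf.card as a sum over Tf
    have hcard : Uf.card = ∑ p ∈ Tf, (Sf.filter fun s => s.2 = p.2).card := by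
      rw [Finset.card_eq_sum_card_fiberwise (f := Prod.fst) (t := Tf)
        (by rintro q hq; simp only [hUf, Finset.mem_coe, Finset.mem_filter, Finset.mem_product] at hq
            exact hq.1.1)]
      refine Finset.sum_congr rfl fun p hp => ?_
      apply Finset.card_bij (fun q _ => q.2)
      · rintro q hq
        simp only [hUf, Finset.mem_filter, Finset.mem_product] at hq
        simp only [Finset.mem_filter]
        exact ⟨hq.1.1.2, hq.1.2.trans (by rw [hq.2])⟩
      · rintro q1 hq1 q2 hq2 h
        simp only [Finset.mem_filter] at hq1 hq2
        have e1 : q1.1 = p := hq1.2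
        have e2 : q2.1 = p := hq2.2
        exact Prod.ext (e1.trans e2.symm) h
      · rintro s hs
        simp only [Finset.mem_filter] at hs
        refine ⟨(p, s), ?_, rfl⟩
        refine Finset.mem_filter.mpr ⟨?_, rfl⟩
        exact Finset.mem_filter.mpr ⟨Finset.mem_product.mpr ⟨hp, hs.1⟩, hs.2⟩
    -- lower bound: Δ * Tf.card ≤ Uf.card
    have hlow : Δ * Tf.card ≤ (Uf.card : ℝ) := by
      rw [hcard]
      push_cast
      have hconst : Δ * (Tf.card : ℝ) = ∑ _p ∈ Tf, Δ := by
        rw [Finset.sum_const, nsmul_eq_mul]; ring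
      rw [hconst]
      refine Finset.sum_le_sum fun p hp => ?_
      have hpT : p ∈ T := by rwa [hTf, Set.Finite.mem_toFinset] at hp
      have := hpT.1
      rw [hdeg p.2] at this
      exact this.le
    -- upper bound: Uf.card ≤ Rf.card * Sf.card
    have hup : Uf.card ≤ Rf.card * Sf.card := by
      rw [← Finset.card_product]
      apply Finset.card_le_card_of_injOn (fun q => ((q.1.1, w q.1), q.2))
      · rintro q hq
        simp only [hUf, Finset.mem_coe, Finset.mem_filter, Finset.mem_product] at hq
        have hpT : q.1 ∈ T := by
          have := hq.1.1; rwa [hTf, Set.Finite.mem_toFinset] at this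
        have hex := hpT.2
        simp only [Finset.mem_coe, Finset.mem_product]
        constructor
        · rw [hw]
          simp only [hex, dif_pos]
          have := hex.choose_spec.1
          simpa [Rf, hR] using this
        · exact hq.1.2
      · rintro q1 hq1 q2 hq2 h
        simp only [hUf, Finset.mem_coe, Finset.mem_filter, Finset.mem_product] at hq1 hq2
        have h' : ((q1.1.1, w q1.1), q1.2) = ((q2.1.1, w q2.1), q2.2) := h
        obtain ⟨h12, h2⟩ := Prod.mk.inj h'
        obtain ⟨h1, -⟩ := Prod.mk.inj h12
        have h3 : q1.1.2 = q2.1.2 := by rw [← hq1.2, ← hq2.2, h2]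
        exact Prod.ext (Prod.ext h1 h3) h2
    -- conclude
    have hTcard : T.ncard = Tf.card := Set.ncard_eq_toFinset_card T hTfin
    have hRcard : R.ncard = Rf.card := Set.ncard_eq_toFinset_card R hR
    have hScard : S.ncard = Sf.card := Set.ncard_eq_toFinset_card S hS
    rw [le_div_iff₀ hΔ, hTcard, hRcard, hScard]
    calc ((Tf.card : ℝ)) * Δ = Δ * Tf.card := by ring
    _ ≤ (Uf.card : ℝ) := hlow
    _ ≤ ((Rf.card * Sf.card : ℕ) : ℝ) := by exact_mod_cast hup
    _ = (Rf.card : ℝ) * (Sf.card : ℝ) := by push_cast; ring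
  · -- B empty
    have hTe : T = ∅ := Set.eq_empty_of_forall_notMem fun p hp => hB ⟨hp.2.choose⟩
    rw [hTe]
    simp only [Set.ncard_empty, Nat.cast_zero]
    positivity
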